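/- arXiv:math/0512149 — 4 statements merged into one kernel-verified Lean document; each statement's English description precedes it below -/
import Mathlib

section
/- The function u(x) = ln(√96/(√96 + |x|²)) on ℝ⁴ satisfies Δ²u = e^{4u}, where Δ = -∑∂ᵢᵢ is the geometer's Laplacian. -/
open MeasureTheory Metric Real Filter

noncomputable section

local notation "E4" => EuclideanSpace ℝ (Fin 4)

/-- The geometer's Laplacian `Δ = -∑ ∂ᵢᵢ` on `ℝ⁴`. -/
def lap (u : EuclideanSpace ℝ (Fin 4) → ℝ) (x : EuclideanSpace ℝ (Fin 4)) : ℝ :=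
  -∑ i : Fin 4, iteratedFDeriv ℝ 2 u x ![EuclideanSpace.single i 1, EuclideanSpace.single i 1]

/-- The bi-Laplacian `Δ²`. -/
def biLap (u : EuclideanSpace ℝ (Fin 4) → ℝ) (x : EuclideanSpace ℝ (Fin 4)) : ℝ :=
  lap (lap u) x

/-- The inner product as a continuous bilinear map. -/
def Phi : E4 →L[ℝ] E4 →L[ℝ] ℝ :=
  (isBoundedBilinearMap_inner (𝕜 := ℝ) (E := E4)).toContinuousLinearMap

lemma Phi_apply (v w : E4) : Phi v w = inner ℝ v w := rfl

lemma lap_radial (g g₁ g₂ : ℝ → ℝ)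
    (hg : ∀ t, 0 ≤ t → HasDerivAt g (g₁ t) t)
    (hg' : ∀ t, 0 ≤ t → HasDerivAt g₁ (g₂ t) t)
    (x : E4) :
    lap (fun y => g (‖y‖ ^ 2)) x
      = -(4 * ‖x‖ ^ 2 * g₂ (‖x‖ ^ 2) + 8 * g₁ (‖x‖ ^ 2)) := by
  have hS : ∀ y : E4, HasFDerivAt (fun z : E4 => ‖z‖ ^ 2) (2 • (innerSL ℝ y)) y :=
    fun y => (hasStrictFDerivAt_norm_sq y).hasFDerivAt
  -- first derivative
  have hf1 : ∀ y : E4, HasFDerivAt (fun z : E4 => g (‖z‖ ^ 2))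
      ((2 * g₁ (‖y‖ ^ 2)) • Phi y) y := by
    intro y
    have h := (hg (‖y‖ ^ 2) (by positivity)).comp_hasFDerivAt y (hS y)
    refine h.congr_fderiv ?_
    ext w
    simp [Phi_apply, smul_smul, mul_comm, real_inner_comm]
    ring
  have hfd : fderiv ℝ (fun z : E4 => g (‖z‖ ^ 2))
      = fun y => (2 * g₁ (‖y‖ ^ 2)) • Phi y := funext fun y => (hf1 y).fderiv
  -- second derivative
  have hc : HasFDerivAt (fun y : E4 => 2 * g₁ (‖y‖ ^ 2))
      ((2 * g₂ (‖x‖ ^ 2)) • (2 • (innerSL ℝ x))) x := by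
    have h := ((hg' (‖x‖ ^ 2) (by positivity)).const_mul 2).comp_hasFDerivAt x (hS x)
    exact h
  have hf2 : HasFDerivAt (fun y : E4 => (2 * g₁ (‖y‖ ^ 2)) • Phi y)
      ((2 * g₁ (‖x‖ ^ 2)) • Phi
        + ((2 * g₂ (‖x‖ ^ 2)) • (2 • (innerSL ℝ x))).smulRight (Phi x)) x :=
    hc.smul Phi.hasFDerivAt
  have hkey : ∀ i : Fin 4,
      iteratedFDeriv ℝ 2 (fun z : E4 => g (‖z‖ ^ 2)) x
        ![EuclideanSpace.single i 1, EuclideanSpace.single i 1]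
      = 2 * g₁ (‖x‖ ^ 2) + 4 * g₂ (‖x‖ ^ 2) * (x i) ^ 2 := by
    intro i
    rw [iteratedFDeriv_two_apply]
    have : fderiv ℝ (fderiv ℝ (fun z : E4 => g (‖z‖ ^ 2))) x
        = (2 * g₁ (‖x‖ ^ 2)) • Phi
          + ((2 * g₂ (‖x‖ ^ 2)) • (2 • (innerSL ℝ x))).smulRight (Phi x) := by
      rw [hfd]; exact hf2.fderiv
    rw [this]
    have h1 : (inner ℝ x (EuclideanSpace.single i (1:ℝ)) : ℝ) = x i := by
      simp [EuclideanSpace.inner_single_right]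
    have h2 : (inner ℝ (EuclideanSpace.single i (1:ℝ)) (EuclideanSpace.single i (1:ℝ)) : ℝ) = 1 := by
      simp [EuclideanSpace.inner_single_right]
    simp only [Matrix.cons_val_zero, Matrix.cons_val_one, Matrix.head_cons,
      ContinuousLinearMap.add_apply, ContinuousLinearMap.smul_apply,
      ContinuousLinearMap.smulRight_apply, ContinuousLinearMap.smul_apply,
      smul_eq_mul, Phi_apply]
    rw [h1, h2]
    simp [two_smul, h1]
    ring
  have hsum : ∑ i : Fin 4, (x i) ^ 2 = ‖x‖ ^ 2 := by
    rw [← real_inner_self_eq_norm_sq]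
    simp only [PiLp.inner_apply, RCLike.inner_apply, conj_trivial, sq]
  rw [lap]
  rw [Finset.sum_congr rfl fun i _ => hkey i]
  rw [Finset.sum_add_distrib, Finset.sum_const, ← Finset.mul_sum, hsum]
  simp
  ring

theorem stmt0 (u : EuclideanSpace ℝ (Fin 4) → ℝ)
    (hu : ∀ x, u x = Real.log (Real.sqrt 96 / (Real.sqrt 96 + ‖x‖ ^ 2))) :
    ∀ x, biLap u x = Real.exp (4 * u x) := by
  intro x
  set a := Real.sqrt 96 with ha_def
  have ha : 0 < a := Real.sqrt_pos.mpr (by norm_num)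
  have ha2 : a ^ 2 = 96 := Real.sq_sqrt (by norm_num)
  set g  : ℝ → ℝ := fun t => Real.log a - Real.log (a + t) with hg_def
  set g₁ : ℝ → ℝ := fun t => -(a + t)⁻¹ with hg1_def
  set g₂ : ℝ → ℝ := fun t => ((a + t) ^ 2)⁻¹ with hg2_def
  set G  : ℝ → ℝ := fun t => -(4 * t * g₂ t + 8 * g₁ t) with hG_def
  set G₁ : ℝ → ℝ := fun t => -12 * ((a + t) ^ 2)⁻¹ + 8 * t * ((a + t) ^ 3)⁻¹ with hG1_def
  set G₂ : ℝ → ℝ := fun t => 32 * ((a + t) ^ 3)⁻¹ - 24 * t * ((a + t) ^ 4)⁻¹ with hG2_def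
  have hdpos : ∀ t : ℝ, 0 ≤ t → 0 < a + t := fun t ht => by linarith
  have h1 : ∀ t : ℝ, HasDerivAt (fun s : ℝ => a + s) 1 t :=
    fun t => (hasDerivAt_id t).const_add a
  have hg : ∀ t, 0 ≤ t → HasDerivAt g (g₁ t) t := by
    intro t ht
    have hd := (hdpos t ht).ne'
    have := (hasDerivAt_const t (Real.log a)).sub ((h1 t).log hd)
    refine this.congr_deriv ?_
    simp only [hg_def, hg1_def, hg2_def, hG_def, hG1_def, hG2_def]
    field_simp
    ring
  have hg1 : ∀ t, 0 ≤ t → HasDerivAt g₁ (g₂ t) t := by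
    intro t ht
    have hd := (hdpos t ht).ne'
    have := ((h1 t).inv hd).neg
    refine this.congr_deriv ?_
    simp only [hg_def, hg1_def, hg2_def, hG_def, hG1_def, hG2_def]
    field_simp
  have hG : ∀ t, 0 ≤ t → HasDerivAt G (G₁ t) t := by
    intro t ht
    have hd := (hdpos t ht).ne'
    have hp2 : HasDerivAt (fun s : ℝ => (a + s) ^ 2) (2 * (a + t) ^ 1 * 1) t := (h1 t).pow 2
    have hi2 := hp2.inv (pow_ne_zero 2 hd)
    have hmul : HasDerivAt (fun s : ℝ => 4 * s * ((a + s) ^ 2)⁻¹)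
        (4 * ((a + t) ^ 2)⁻¹ + (4 * t) * (-(2 * (a + t) ^ 1 * 1) / ((a + t) ^ 2) ^ 2)) t := by
      have := (((hasDerivAt_id t).const_mul 4).mul hi2)
      refine this.congr_deriv ?_
      simp only [id_eq, Pi.inv_apply]
      ring
    have hinv := ((h1 t).inv hd)
    have := (hmul.add ((hinv.neg).const_mul 8)).neg
    refine this.congr_deriv ?_
    simp only [hg_def, hg1_def, hg2_def, hG_def, hG1_def, hG2_def]
    have h2 : a + t ≠ 0 := hd
    field_simp
    ring
  have hG1 : ∀ t, 0 ≤ t → HasDerivAt G₁ (G₂ t) t := by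
    intro t ht
    have hd := (hdpos t ht).ne'
    have hp2 : HasDerivAt (fun s : ℝ => (a + s) ^ 2) (2 * (a + t) ^ 1 * 1) t := (h1 t).pow 2
    have hi2 := hp2.inv (pow_ne_zero 2 hd)
    have hp3 : HasDerivAt (fun s : ℝ => (a + s) ^ 3) (3 * (a + t) ^ 2 * 1) t := (h1 t).pow 3
    have hi3 := hp3.inv (pow_ne_zero 3 hd)
    have hmul : HasDerivAt (fun s : ℝ => 8 * s * ((a + s) ^ 3)⁻¹)
        (8 * ((a + t) ^ 3)⁻¹ + (8 * t) * (-(3 * (a + t) ^ 2 * 1) / ((a + t) ^ 3) ^ 2)) t := by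
      have := (((hasDerivAt_id t).const_mul 8).mul hi3)
      refine this.congr_deriv ?_
      simp only [id_eq, Pi.inv_apply]
      ring
    have := ((hi2.const_mul (-12)).add hmul)
    refine this.congr_deriv ?_
    simp only [hg_def, hg1_def, hg2_def, hG_def, hG1_def, hG2_def]
    field_simp
    ring
  -- first application
  have hufun : u = fun y : EuclideanSpace ℝ (Fin 4) => g (‖y‖ ^ 2) := by
    funext y
    rw [hu y, hg_def]
    have : (0:ℝ) < a + ‖y‖ ^ 2 := hdpos _ (by positivity)
    rw [Real.log_div ha.ne' this.ne']
  have hlap : lap u = fun y : EuclideanSpace ℝ (Fin 4) => G (‖y‖ ^ 2) := by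
    funext y
    rw [hufun, lap_radial g g₁ g₂ hg hg1 y]
  have hbl : biLap u x = -(4 * ‖x‖ ^ 2 * G₂ (‖x‖ ^ 2) + 8 * G₁ (‖x‖ ^ 2)) := by
    rw [biLap, hlap, lap_radial G G₁ G₂ hG hG1 x]
  rw [hbl, hu x]
  set s := ‖x‖ ^ 2 with hs_def
  have hs : 0 ≤ s := by positivity
  have hd : (0:ℝ) < a + s := hdpos s hs
  have hq : (0:ℝ) < a / (a + s) := div_pos ha hd
  have hexp : Real.exp (4 * Real.log (a / (a + s))) = (a / (a + s)) ^ 4 := by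
    rw [show (4:ℝ) * Real.log (a / (a + s)) = Real.log ((a / (a + s)) ^ (4:ℕ)) by
      rw [Real.log_pow]; norm_num]
    exact Real.exp_log (by positivity)
  rw [hexp, hG1_def, hG2_def]
  have key : (a / (a + s)) ^ 4 = 96 * a ^ 2 / (a + s) ^ 4 := by
    rw [div_pow, show a ^ 4 = 96 * a ^ 2 by rw [← ha2]; ring]
  rw [key]
  have hd' := hd.ne'
  field_simp
  ring
end
end

section
/- The integral over ℝ⁴ of e^{4u} dx, where u(x) = ln(√96/(√96 + |x|²)), equals 16π². -/
open MeasureTheory Metric Real Filter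
open scoped RealInnerProductSpace

noncomputable section

theorem radial_aux_stmt1 (a : ℝ) (hapos : 0 < a) :
    ∫ y in Set.Ioi (0:ℝ), y ^ 3 * (a / (a + y ^ 2)) ^ 4 = a ^ 2 / 12 := by
  set g : ℝ → ℝ := fun y => a ^ 4 * (a / (6 * (a + y ^ 2) ^ 3) - 1 / (4 * (a + y ^ 2) ^ 2)) with hg
  have hd : ∀ y ∈ Set.Ici (0:ℝ), HasDerivAt g (y ^ 3 * (a / (a + y ^ 2)) ^ 4) y := by
    intro y hy
    have hden : (0:ℝ) < a + y ^ 2 := by positivity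
    have h1 : HasDerivAt (fun y : ℝ => a + y ^ 2) (2 * y) y := by
      simpa using (hasDerivAt_pow 2 y).const_add a
    have h3 : HasDerivAt (fun y : ℝ => (a + y ^ 2) ^ 3) (3 * (a + y ^ 2) ^ 2 * (2 * y)) y := by
      simpa using (h1.fun_pow 3)
    have h2 : HasDerivAt (fun y : ℝ => (a + y ^ 2) ^ 2) (2 * (a + y ^ 2) ^ 1 * (2 * y)) y := by
      simpa using (h1.fun_pow 2)
    have hA : HasDerivAt (fun y : ℝ => a / (6 * (a + y ^ 2) ^ 3))
        (-(a * (6 * (3 * (a + y ^ 2) ^ 2 * (2 * y)))) / (6 * (a + y ^ 2) ^ 3) ^ 2) y := by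
      have := (hasDerivAt_const y a).fun_div (h3.const_mul 6) (by positivity)
      simpa using this
    have hB : HasDerivAt (fun y : ℝ => 1 / (4 * (a + y ^ 2) ^ 2))
        (-(1 * (4 * (2 * (a + y ^ 2) ^ 1 * (2 * y)))) / (4 * (a + y ^ 2) ^ 2) ^ 2) y := by
      have := (hasDerivAt_const y (1:ℝ)).fun_div (h2.const_mul 4) (by positivity)
      simpa using this
    have := ((hA.fun_sub hB).const_mul (a ^ 4))
    refine this.congr_deriv ?_
    field_simp
    ring
  have htend : Tendsto g atTop (nhds 0) := by
    have h1 : Tendsto (fun y : ℝ => a + y ^ 2) atTop atTop :=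
      tendsto_atTop_add_const_left _ a (tendsto_pow_atTop (by norm_num))
    have hA : Tendsto (fun y : ℝ => a / (6 * (a + y ^ 2) ^ 3)) atTop (nhds 0) :=
      Tendsto.div_atTop tendsto_const_nhds
        (Tendsto.const_mul_atTop (by norm_num) ((tendsto_pow_atTop (by norm_num)).comp h1))
    have hB : Tendsto (fun y : ℝ => 1 / (4 * (a + y ^ 2) ^ 2)) atTop (nhds 0) :=
      Tendsto.div_atTop tendsto_const_nhds
        (Tendsto.const_mul_atTop (by norm_num) ((tendsto_pow_atTop (by norm_num)).comp h1))
    have h0 : (0:ℝ) = a ^ 4 * (0 - 0) := by ring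
    rw [hg, h0]
    exact (hA.sub hB).const_mul (a ^ 4)
  have hpos : ∀ y ∈ Set.Ioi (0:ℝ), 0 ≤ y ^ 3 * (a / (a + y ^ 2)) ^ 4 := by
    intro y hy
    have : (0:ℝ) < y := hy
    positivity
  have := integral_Ioi_of_hasDerivAt_of_nonneg' hd hpos htend
  rw [this, hg]
  have hane : a ≠ 0 := hapos.ne'
  field_simp
  ring

theorem stmt1 (u : EuclideanSpace ℝ (Fin 4) → ℝ)
    (hu : ∀ x, u x = Real.log (Real.sqrt 96 / (Real.sqrt 96 + ‖x‖ ^ 2))) :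
    ∫ x : EuclideanSpace ℝ (Fin 4), Real.exp (4 * u x) = 16 * Real.pi ^ 2 := by
  set a : ℝ := Real.sqrt 96 with ha
  have hapos : 0 < a := Real.sqrt_pos.mpr (by norm_num)
  have ha2 : a ^ 2 = 96 := Real.sq_sqrt (by norm_num)
  have key : ∀ x : EuclideanSpace ℝ (Fin 4),
      Real.exp (4 * u x) = (fun y : ℝ => (a / (a + y ^ 2)) ^ 4) ‖x‖ := by
    intro x
    have hpos : 0 < a / (a + ‖x‖ ^ 2) := by positivity
    rw [hu x, show (4:ℝ) * Real.log (a / (a + ‖x‖ ^ 2)) =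
        ((4:ℕ):ℝ) * Real.log (a / (a + ‖x‖ ^ 2)) by norm_num,
      Real.exp_nat_mul, Real.exp_log hpos]
  simp_rw [key]
  rw [integral_fun_norm_addHaar (volume : Measure (EuclideanSpace ℝ (Fin 4)))
    (fun y : ℝ => (a / (a + y ^ 2)) ^ 4)]
  have hdim : Module.finrank ℝ (EuclideanSpace ℝ (Fin 4)) = 4 := finrank_euclideanSpace_fin
  rw [hdim]
  have hball : (volume (ball (0 : EuclideanSpace ℝ (Fin 4)) 1)).toReal = π ^ 2 / 2 := by
    rw [EuclideanSpace.volume_ball]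
    simp only [Fintype.card_fin]
    rw [show ((4:ℕ):ℝ)/2 + 1 = (2:ℕ) + 1 by norm_num, Real.Gamma_nat_eq_factorial]
    rw [ENNReal.toReal_mul, ENNReal.toReal_pow, ENNReal.toReal_ofReal (by norm_num),
      ENNReal.toReal_ofReal (by positivity)]
    rw [show Real.sqrt π ^ 4 = (Real.sqrt π ^ 2) ^ 2 by ring, Real.sq_sqrt Real.pi_nonneg]
    norm_num
  rw [measureReal_def, hball]
  have : ∫ y in Set.Ioi (0:ℝ), y ^ (4 - 1) • (a / (a + y ^ 2)) ^ 4 = a ^ 2 / 12 := by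
    simpa using radial_aux_stmt1 a hapos
  rw [this, ha2]
  simp only [nsmul_eq_mul, smul_eq_mul]
  ring
end
end

section
/- Let φ ∈ C⁴(ℝ⁴) be radially symmetric, biharmonic (Δ²φ = 0 with Δ = -∑∂ᵢᵢ), satisfying φ(x) ≤ φ(0) = 0 for all x ∈ ℝ⁴ and φ ≢ 0. Then there exists α > 0 such that φ(x) = -α|x|² for all x ∈ ℝ⁴. -/
open MeasureTheory Metric Real Filter
open scoped RealInnerProductSpace

noncomputable section

abbrev E4 := EuclideanSpace ℝ (Fin 4)

lemma myHasFDerivAt_norm {x : E4} (hx : x ≠ 0) :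
    HasFDerivAt (fun y : E4 => ‖y‖) (‖x‖⁻¹ • innerSL ℝ x) x := by
  have hxx : ⟪x, x⟫ ≠ 0 := inner_self_ne_zero.2 hx
  have h1 : HasFDerivAt (fun y : E4 => ⟪y, y⟫)
      ((fderivInnerCLM ℝ (x, x)).comp ((ContinuousLinearMap.id ℝ E4).prod
        (ContinuousLinearMap.id ℝ E4))) x :=
    (hasFDerivAt_id x).inner ℝ (hasFDerivAt_id x)
  have h2 := HasDerivAt.comp_hasFDerivAt (f := fun y : E4 => ⟪y, y⟫) x (hasDerivAt_sqrt hxx) h1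
  have heq : (fun y : E4 => Real.sqrt ⟪y, y⟫) = fun y : E4 => ‖y‖ := by
    funext y
    rw [real_inner_self_eq_norm_sq, Real.sqrt_sq (norm_nonneg y)]
  rw [Function.comp_def, heq] at h2
  convert h2 using 1 <;> first | rfl | skip
  ext v
  have hxn : ‖x‖ ≠ 0 := norm_ne_zero_iff.2 hx
  have hs : Real.sqrt (⟪x, x⟫) = ‖x‖ := by
    rw [real_inner_self_eq_norm_sq, Real.sqrt_sq (norm_nonneg x)]
  simp only [ContinuousLinearMap.smul_apply, innerSL_apply_apply, ContinuousLinearMap.coe_comp',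
    Function.comp_apply, ContinuousLinearMap.prod_apply, ContinuousLinearMap.coe_id', id_eq,
    fderivInnerCLM_apply, smul_eq_mul, hs]
  rw [real_inner_comm v x]
  field_simp
  ring

lemma lemA (u : E4 → ℝ) (g : ℝ → ℝ)
    (hg : ContDiff ℝ 2 g) (hug : ∀ y, u y = g ‖y‖) {x : E4} (hx : x ≠ 0) :
    ∑ i : Fin 4, iteratedFDeriv ℝ 2 u x ![EuclideanSpace.single i 1, EuclideanSpace.single i 1]
      = deriv (deriv g) ‖x‖ + 3 * deriv g ‖x‖ / ‖x‖ := by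
  have hr : (0:ℝ) < ‖x‖ := norm_pos_iff.2 hx
  set r := ‖x‖ with hrdef
  have hgd : Differentiable ℝ g := hg.differentiable (by norm_num)
  have hgd2 : Differentiable ℝ (deriv g) :=
    ((contDiff_succ_iff_deriv (n := 1).mp (by exact_mod_cast hg)).2.2).differentiable one_ne_zero
  -- Step 1 : first derivative of u away from 0
  have hstep1 : ∀ y : E4, y ≠ 0 →
      HasFDerivAt u ((deriv g ‖y‖ * ‖y‖⁻¹) • innerSL ℝ y) y := by
    intro y hy
    have h := HasDerivAt.comp_hasFDerivAt (f := fun z : E4 => ‖z‖) y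
      ((hgd ‖y‖).hasDerivAt) (myHasFDerivAt_norm hy)
    have hfun : (g ∘ fun z : E4 => ‖z‖) = u := by
      funext z; simp [Function.comp, (hug z).symm]
    rw [hfun, smul_smul] at h
    exact h
  -- the function c
  set c : E4 → ℝ := fun y => deriv g ‖y‖ * ‖y‖⁻¹ with hcdef
  set N : E4 →L[ℝ] ℝ := ‖x‖⁻¹ • innerSL ℝ x with hNdef
  have hN : HasFDerivAt (fun y : E4 => ‖y‖) N x := myHasFDerivAt_norm hx
  have hA : HasFDerivAt (fun y : E4 => deriv g ‖y‖) (deriv (deriv g) r • N) x :=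
    HasDerivAt.comp_hasFDerivAt (f := fun z : E4 => ‖z‖) x ((hgd2 r).hasDerivAt) hN
  have hB : HasFDerivAt (fun y : E4 => ‖y‖⁻¹) ((-(r^2)⁻¹) • N) x := by
    have := HasDerivAt.comp_hasFDerivAt (f := fun z : E4 => ‖z‖) x
      (hasDerivAt_inv hr.ne') hN
    rwa [smul_smul, ← smul_smul] at this
  have hc : HasFDerivAt c
      ((deriv g r • ((-(r^2)⁻¹) • N)) + (r⁻¹ • (deriv (deriv g) r • N))) x := hA.mul hB
  set c' : E4 →L[ℝ] ℝ :=
    (deriv g r • ((-(r^2)⁻¹) • N)) + (r⁻¹ • (deriv (deriv g) r • N)) with hc'def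
  -- derivative of G y = c y • innerSL y
  set B : E4 →L[ℝ] (E4 →L[ℝ] ℝ) := innerSL ℝ with hBdef
  have hInner : HasFDerivAt (fun y : E4 => B y) B x := B.hasFDerivAt
  have hG : HasFDerivAt (fun y : E4 => c y • B y)
      (c x • B + c'.smulRight (B x)) x :=
    hc.smul hInner
  -- fderiv u agrees with G near x
  have hFG : (fderiv ℝ u) =ᶠ[nhds x] (fun y : E4 => c y • B y) := by
    filter_upwards [IsOpen.mem_nhds isOpen_compl_singleton hx] with y hy
    have h := (hstep1 y hy).fderiv
    rw [h]
  have hF : HasFDerivAt (fderiv ℝ u)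
      (c x • B + c'.smulRight (B x)) x :=
    hG.congr_of_eventuallyEq hFG
  have hD := hF.fderiv
  -- now compute the sum
  have happ : ∀ i : Fin 4,
      iteratedFDeriv ℝ 2 u x ![EuclideanSpace.single i 1, EuclideanSpace.single i 1]
        = c x * ⟪EuclideanSpace.single i (1:ℝ), EuclideanSpace.single i (1:ℝ)⟫
          + c' (EuclideanSpace.single i 1) * ⟪x, EuclideanSpace.single i (1:ℝ)⟫ := by
    intro i
    rw [iteratedFDeriv_two_apply]
    simp only [Matrix.cons_val_zero, Matrix.cons_val_one, Matrix.head_cons]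
    rw [hD]
    rfl
  rw [Finset.sum_congr rfl (fun i _ => happ i)]
  rw [Finset.sum_add_distrib]
  have hs1 : ∑ i : Fin 4,
      c x * ⟪EuclideanSpace.single i (1:ℝ), EuclideanSpace.single i (1:ℝ)⟫ = 4 * c x := by
    simp [EuclideanSpace.inner_single_right]
  have hs2 : ∑ i : Fin 4, c' (EuclideanSpace.single i 1) * ⟪x, EuclideanSpace.single i (1:ℝ)⟫
      = c' x := by
    have hxsum : x = ∑ i : Fin 4, (x i) • EuclideanSpace.single i (1:ℝ) := by
      have hb := (EuclideanSpace.basisFun (Fin 4) ℝ).sum_repr x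
      simp only [EuclideanSpace.basisFun_apply, EuclideanSpace.basisFun_repr] at hb
      exact hb.symm
    conv_rhs => rw [hxsum]
    rw [map_sum]
    apply Finset.sum_congr rfl
    intro i _
    rw [_root_.map_smul, smul_eq_mul]
    simp [EuclideanSpace.inner_single_right]
    ring
  rw [hs1, hs2]
  -- compute c x and c' x
  have hcx : c x = deriv g r * r⁻¹ := rfl
  have hc'x : c' x = deriv g r * (-(r^2)⁻¹) * r + r⁻¹ * (deriv (deriv g) r) * r := by
    rw [hc'def]
    have hNx : N x = r := by
      have h2 : ((innerSL ℝ) x) x = r ^ 2 := by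
        rw [innerSL_apply_apply, real_inner_self_eq_norm_sq]
      rw [hNdef]
      simp only [ContinuousLinearMap.smul_apply, smul_eq_mul, hBdef, h2]
      rw [sq]
      field_simp
      exact hrdef
    simp only [ContinuousLinearMap.add_apply, ContinuousLinearMap.smul_apply, smul_eq_mul, hNx]
    ring
  rw [hcx, hc'x]
  field_simp
  ring

lemma const_of_deriv_zero_nonneg (f : ℝ → ℝ)
    (hf : ∀ t : ℝ, 0 ≤ t → HasDerivAt f 0 t) (hcont : Continuous f) :
    ∀ t : ℝ, 0 ≤ t → f t = f 0 := by
  intro t ht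
  rcases eq_or_lt_of_le ht with h | h
  · rw [← h]
  · exact constant_of_has_deriv_right_zero (hcont.continuousOn)
      (fun s hs => (hf s hs.1).hasDerivWithinAt) t ⟨ht, le_rfl⟩

lemma deriv_zero_of_even (f : ℝ → ℝ) (hf : DifferentiableAt ℝ f 0)
    (he : ∀ t, f (-t) = f t) : deriv f 0 = 0 := by
  have h1 : deriv (fun t => f (-t)) 0 = deriv f 0 := by
    congr 1
    funext t
    exact he t
  rw [deriv_comp_neg] at h1
  simp at h1
  linarith
lemma contDiff_lap {φ : E4 → ℝ} (hφ : ContDiff ℝ 4 φ) : ContDiff ℝ 2 (lap φ) := by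
  have h1 : ContDiff ℝ 3 (fderiv ℝ φ) := hφ.fderiv_right (by norm_num)
  have h2 : ContDiff ℝ 2 (fderiv ℝ (fderiv ℝ φ)) := h1.fderiv_right (by norm_num)
  have heq : lap φ = fun x => -∑ i : Fin 4,
      (fderiv ℝ (fderiv ℝ φ) x (EuclideanSpace.single i 1)) (EuclideanSpace.single i 1) := by
    funext x
    unfold lap
    congr 1
    refine Finset.sum_congr rfl fun i _ => ?_
    rw [iteratedFDeriv_two_apply]
    simp
  rw [heq]
  apply ContDiff.neg
  apply ContDiff.sum
  intro i _
  exact (h2.clm_apply contDiff_const).clm_apply contDiff_const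

theorem stmt7 (φ : EuclideanSpace ℝ (Fin 4) → ℝ)
    (hφ : ContDiff ℝ 4 φ)
    (hrad : ∀ x y : EuclideanSpace ℝ (Fin 4), ‖x‖ = ‖y‖ → φ x = φ y)
    (hbih : ∀ x, biLap φ x = 0)
    (hmax : ∀ x, φ x ≤ φ 0) (h0 : φ 0 = 0)
    (hnz : ∃ x, φ x ≠ 0) :
    ∃ α : ℝ, 0 < α ∧ ∀ x, φ x = -α * ‖x‖ ^ 2 := by
  classical
  have hne0 : ‖(EuclideanSpace.single 0 1 : E4)‖ = 1 := by
    rw [EuclideanSpace.norm_single]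
    norm_num
  have hnsmul : ∀ t : ℝ, ‖t • (EuclideanSpace.single 0 1 : E4)‖ = |t| := by
    intro t
    rw [norm_smul, hne0, mul_one, Real.norm_eq_abs]
  have hsm : ContDiff ℝ 4 (fun t : ℝ => t • (EuclideanSpace.single 0 1 : E4)) :=
    contDiff_id.smul contDiff_const
  have hg4 : ContDiff ℝ 4 (fun t : ℝ => φ (t • EuclideanSpace.single 0 1)) := hφ.comp hsm
  set g : ℝ → ℝ := fun t => φ (t • EuclideanSpace.single 0 1) with hgdef
  have hg : ContDiff ℝ 2 g := hg4.of_le (by norm_num)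
  have hug : ∀ y : E4, φ y = g ‖y‖ := by
    intro y
    apply hrad
    rw [hnsmul, abs_of_nonneg (norm_nonneg y)]
  have hgeven : ∀ t : ℝ, g (-t) = g t := by
    intro t
    apply hrad
    rw [hnsmul, hnsmul, abs_neg]
  -- the Laplacian formula for φ
  have hlap : ∀ x : E4, x ≠ 0 →
      lap φ x = -(deriv (deriv g) ‖x‖ + 3 * deriv g ‖x‖ / ‖x‖) := by
    intro x hx
    unfold lap
    rw [lemA φ g hg hug hx]
  -- the profile k of lap φ
  have hh2 : ContDiff ℝ 2 (lap φ) := contDiff_lap hφ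
  have hk : ContDiff ℝ 2 (fun t : ℝ => lap φ (t • EuclideanSpace.single 0 1)) :=
    hh2.comp (hsm.of_le (by norm_num))
  set k : ℝ → ℝ := fun t => lap φ (t • EuclideanSpace.single 0 1) with hkdef
  have hsmne : ∀ t : ℝ, 0 < t → (t • (EuclideanSpace.single 0 1 : E4)) ≠ 0 := by
    intro t ht hcon
    rw [← norm_eq_zero, hnsmul, abs_of_pos ht] at hcon
    exact ht.ne' hcon
  have hkh : ∀ y : E4, lap φ y = k ‖y‖ := by
    intro y
    by_cases hy : y = 0
    · subst hy
      have : k ‖(0 : E4)‖ = lap φ ((0:ℝ) • EuclideanSpace.single 0 1) := by rw [norm_zero]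
      rw [this, zero_smul]
    · have hy2 : (‖y‖ • (EuclideanSpace.single 0 1 : E4)) ≠ 0 :=
        hsmne ‖y‖ (norm_pos_iff.2 hy)
      have h1 : k ‖y‖ = lap φ (‖y‖ • EuclideanSpace.single 0 1) := rfl
      rw [h1, hlap y hy, hlap _ hy2, hnsmul, abs_of_nonneg (norm_nonneg y)]
  have hkeven : ∀ t : ℝ, k (-t) = k t := by
    intro t
    have h1 : k (-t) = lap φ ((-t) • EuclideanSpace.single 0 1) := rfl
    have h2 : k t = lap φ (t • EuclideanSpace.single 0 1) := rfl
    rw [h1, h2, hkh, hkh, hnsmul, hnsmul, abs_neg]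
  -- differentiability bookkeeping
  have hkd : Differentiable ℝ k := hk.differentiable two_ne_zero
  have hkc1 : ContDiff ℝ 1 (deriv k) :=
    (contDiff_succ_iff_deriv (n := 1).mp (by exact_mod_cast hk)).2.2
  have hkd2 : Differentiable ℝ (deriv k) := hkc1.differentiable one_ne_zero
  have hgd : Differentiable ℝ g := hg.differentiable two_ne_zero
  have hgc1 : ContDiff ℝ 1 (deriv g) :=
    (contDiff_succ_iff_deriv (n := 1).mp (by exact_mod_cast hg)).2.2
  have hgd2 : Differentiable ℝ (deriv g) := hgc1.differentiable one_ne_zero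
  -- ODE for k
  have hODEk : ∀ t : ℝ, 0 < t → deriv (deriv k) t + 3 * deriv k t / t = 0 := by
    intro t ht
    have hx : (t • (EuclideanSpace.single 0 1 : E4)) ≠ 0 := hsmne t ht
    have hb := hbih (t • EuclideanSpace.single 0 1)
    have hl : biLap φ (t • EuclideanSpace.single 0 1)
        = lap (lap φ) (t • EuclideanSpace.single 0 1) := rfl
    rw [hl] at hb
    have hthis : lap (lap φ) (t • EuclideanSpace.single 0 1)
        = -(deriv (deriv k) ‖t • (EuclideanSpace.single 0 1 : E4)‖
        + 3 * deriv k ‖t • (EuclideanSpace.single 0 1 : E4)‖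
          / ‖t • (EuclideanSpace.single 0 1 : E4)‖) := by
      have e : lap (lap φ) (t • EuclideanSpace.single 0 1)
          = -∑ i : Fin 4, iteratedFDeriv ℝ 2 (lap φ) (t • (EuclideanSpace.single 0 1 : E4))
              ![EuclideanSpace.single i 1, EuclideanSpace.single i 1] := rfl
      rw [e, lemA (lap φ) k hk hkh hx]
    rw [hthis, hnsmul, abs_of_pos ht] at hb
    linarith
  -- deriv k vanishes on [0, ∞)
  have hk'0 : deriv k 0 = 0 := deriv_zero_of_even k (hkd 0) hkeven
  have hk'zero : ∀ t : ℝ, 0 ≤ t → deriv k t = 0 := by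
    intro t ht
    rcases eq_or_lt_of_le ht with hh | hh
    · rw [← hh]; exact hk'0
    · have hm : ∀ s : ℝ, 0 ≤ s → HasDerivAt (fun s => s ^ 3 * deriv k s) 0 s := by
        intro s hs
        have hd := (hasDerivAt_pow 3 s).mul (hkd2 s).hasDerivAt
        convert hd using 1 <;> first | rfl | skip
        push_cast
        rcases eq_or_lt_of_le hs with hs0 | hs0
        · rw [← hs0]; ring
        · have h3 : deriv (deriv k) s = -(3 * deriv k s / s) := by
            have := hODEk s hs0; linarith
          rw [h3]
          field_simp
          ring
      have hmc : Continuous (fun s : ℝ => s ^ 3 * deriv k s) :=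
        (continuous_pow 3).mul hkc1.continuous
      have hm0 := const_of_deriv_zero_nonneg _ hm hmc t ht
      simp only [ne_eq, OfNat.ofNat_ne_zero, not_false_eq_true, zero_pow, zero_mul] at hm0
      have ht3 : t ^ 3 ≠ 0 := pow_ne_zero 3 hh.ne'
      exact (mul_eq_zero.mp hm0).resolve_left ht3
  -- k is constant on [0, ∞)
  have hkconst : ∀ t : ℝ, 0 ≤ t → k t = k 0 :=
    const_of_deriv_zero_nonneg k
      (fun t ht => by
        have := (hkd t).hasDerivAt
        rwa [hk'zero t ht] at this)
      hk.continuous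
  have hlapconst : ∀ x : E4, lap φ x = k 0 := by
    intro x
    rw [hkh x]
    exact hkconst ‖x‖ (norm_nonneg x)
  set c0 : ℝ := k 0 with hc0def
  -- ODE for g
  have hODEg : ∀ t : ℝ, 0 < t →
      deriv (deriv g) t + 3 * deriv g t / t = -c0 := by
    intro t ht
    have hx : (t • (EuclideanSpace.single 0 1 : E4)) ≠ 0 := hsmne t ht
    have h1 := hlapconst (t • EuclideanSpace.single 0 1)
    rw [hlap _ hx, hnsmul, abs_of_pos ht] at h1
    linarith
  have hg'0 : deriv g 0 = 0 := deriv_zero_of_even g (hgd 0) hgeven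
  have hg'val : ∀ t : ℝ, 0 ≤ t → deriv g t = -c0 * t / 4 := by
    intro t ht
    rcases eq_or_lt_of_le ht with hh | hh
    · rw [← hh]
      simp [hg'0]
    · have hn : ∀ s : ℝ, 0 ≤ s →
          HasDerivAt (fun s => s ^ 3 * deriv g s + c0 * s ^ 4 / 4) 0 s := by
        intro s hs
        have hd := ((hasDerivAt_pow 3 s).mul (hgd2 s).hasDerivAt).add
          (((hasDerivAt_pow 4 s).const_mul c0).div_const 4)
        convert hd using 1 <;> first | rfl | skip
        push_cast
        rcases eq_or_lt_of_le hs with hs0 | hs0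
        · rw [← hs0]; ring
        · have h3 : deriv (deriv g) s = -c0 - 3 * deriv g s / s := by
            have := hODEg s hs0; linarith
          rw [h3]
          field_simp
          ring
      have hnc : Continuous (fun s : ℝ => s ^ 3 * deriv g s + c0 * s ^ 4 / 4) :=
        ((continuous_pow 3).mul hgc1.continuous).add
          ((continuous_const.mul (continuous_pow 4)).div_const 4)
      have hn0 := const_of_deriv_zero_nonneg _ hn hnc t ht
      simp only [ne_eq, OfNat.ofNat_ne_zero, not_false_eq_true, zero_pow, zero_mul,
        mul_zero, zero_div, add_zero, zero_add] at hn0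
      have ht3 : t ^ 3 ≠ 0 := pow_ne_zero 3 hh.ne'
      have h5 : t ^ 3 * deriv g t = t ^ 3 * (-c0 * t / 4) := by
        have hr : t ^ 3 * (-c0 * t / 4) = -(c0 * t ^ 4 / 4) := by ring
        rw [hr]
        linarith [hn0]
      exact mul_left_cancel₀ ht3 h5
  -- integrate once more
  have hgval : ∀ t : ℝ, 0 ≤ t → g t = -(c0 / 8) * t ^ 2 := by
    intro t ht
    have hp : ∀ s : ℝ, 0 ≤ s → HasDerivAt (fun s => g s + c0 * s ^ 2 / 8) 0 s := by
      intro s hs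
      have hd := ((hgd s).hasDerivAt).add
        (((hasDerivAt_pow 2 s).const_mul c0).div_const 8)
      convert hd using 1 <;> first | rfl | skip
      push_cast
      rw [hg'val s hs]
      ring
    have hpc : Continuous (fun s : ℝ => g s + c0 * s ^ 2 / 8) :=
      hg.continuous.add ((continuous_const.mul (continuous_pow 2)).div_const 8)
    have hp0 := const_of_deriv_zero_nonneg _ hp hpc t ht
    have hg0 : g 0 = 0 := by
      have : g 0 = φ ((0:ℝ) • EuclideanSpace.single 0 1) := rfl
      rw [this, zero_smul, h0]
    simp only [ne_eq, OfNat.ofNat_ne_zero, not_false_eq_true, zero_pow, mul_zero,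
      zero_div, add_zero, hg0, zero_add] at hp0
    have : g t + c0 * t ^ 2 / 8 = 0 := hp0
    linarith
  -- conclusion
  have hφval : ∀ x : E4, φ x = -(c0 / 8) * ‖x‖ ^ 2 := by
    intro x
    rw [hug x, hgval ‖x‖ (norm_nonneg x)]
  refine ⟨c0 / 8, ?_, hφval⟩
  obtain ⟨x0, hx0⟩ := hnz
  have hx0' : φ x0 = -(c0 / 8) * ‖x0‖ ^ 2 := hφval x0
  have hn0' : ‖x0‖ ≠ 0 := by
    intro hcon
    rw [hx0', hcon] at hx0
    simp at hx0
  have hle : φ x0 ≤ 0 := h0 ▸ hmax x0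
  have hnorm2 : 0 < ‖x0‖ ^ 2 := by positivity
  rw [hx0'] at hx0 hle
  rcases lt_trichotomy (c0 / 8) 0 with hc | hc | hc
  · exfalso
    nlinarith
  · exfalso
    rw [hc] at hx0
    simp at hx0
  · exact hc
end
end

section
/- Let δ ∈ (0,1), Λ > 0, and let u: B_δ(0) → ℝ (ball in ℝ⁴) be measurable with ∫_{B_δ(0)} e^{4u} dx ≤ Λ and satisfying |x| e^{u(x)} ≤ C₀ for all x ∈ B_δ(0). Then there exists C' > 0 (depending only on δ, Λ, C₀) such that ∫_{B_δ(0)} e^{4u(y)}/|x-y| dy ≤ C'/|x| for all x ∈ B_δ(0)∖{0}. -/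
open MeasureTheory Metric Real Filter
open scoped RealInnerProductSpace ENNReal

noncomputable section

local notation "E4" => EuclideanSpace ℝ (Fin 4)

lemma riesz_finite : ∫⁻ z in ball (0 : E4) 1, ENNReal.ofReal ‖z‖⁻¹ < ⊤ := by
  set V := volume (ball (0 : E4) 1) with hV
  have hVlt : V < ⊤ := measure_ball_lt_top
  set A : ℕ → Set (E4) := fun n => ball 0 ((2:ℝ)⁻¹ ^ n) \ ball 0 ((2:ℝ)⁻¹ ^ (n+1)) with hA
  have hcover : ball (0 : E4) 1 \ {0} ⊆ ⋃ n, A n := by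
    rintro z ⟨hz1, hz0⟩
    have hz0' : (0:ℝ) < ‖z‖ := norm_pos_iff.2 hz0
    have hex : ∃ n, (2:ℝ)⁻¹ ^ (n+1) ≤ ‖z‖ := by
      obtain ⟨n, hn⟩ := exists_pow_lt_of_lt_one hz0' (by norm_num : (2:ℝ)⁻¹ < 1)
      exact ⟨n, (pow_le_pow_of_le_one (by norm_num) (by norm_num) (Nat.le_succ n)).trans hn.le⟩
    have hspec := Nat.find_spec hex
    refine Set.mem_iUnion.2 ⟨Nat.find hex, ?_, ?_⟩
    · rw [mem_ball_zero_iff]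
      rcases Nat.eq_zero_or_pos (Nat.find hex) with h0 | hpos
      · rw [h0]; simpa using hz1
      · obtain ⟨m, hm⟩ := Nat.exists_eq_succ_of_ne_zero hpos.ne'
        have := Nat.find_min hex (m := m) (by omega)
        push_neg at this
        rw [hm]
        exact this
    · intro h
      rw [mem_ball_zero_iff] at h
      exact absurd hspec (not_le.2 h)
  have hterm : ∀ n : ℕ, ∫⁻ z in A n, ENNReal.ofReal ‖z‖⁻¹ ≤ 2 * (8⁻¹ : ℝ≥0∞)^n * V := by
    intro n
    have hb : ∀ z ∈ A n, ENNReal.ofReal ‖z‖⁻¹ ≤ ENNReal.ofReal ((2:ℝ)^(n+1)) := by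
      intro z hz
      apply ENNReal.ofReal_le_ofReal
      have hzl : (2:ℝ)⁻¹ ^ (n+1) ≤ ‖z‖ := by
        have := hz.2; rw [mem_ball_zero_iff] at this; push_neg at this; exact this
      have h2 : ((2:ℝ)⁻¹ ^ (n+1))⁻¹ = 2^(n+1) := by rw [← inv_pow, inv_inv]
      calc ‖z‖⁻¹ ≤ ((2:ℝ)⁻¹ ^ (n+1))⁻¹ := by
            apply inv_anti₀ (by positivity) hzl
        _ = _ := h2
    calc ∫⁻ z in A n, ENNReal.ofReal ‖z‖⁻¹
        ≤ ∫⁻ _ in A n, ENNReal.ofReal ((2:ℝ)^(n+1)) := setLIntegral_mono measurable_const hb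
      _ = ENNReal.ofReal ((2:ℝ)^(n+1)) * volume (A n) := setLIntegral_const _ _
      _ ≤ ENNReal.ofReal ((2:ℝ)^(n+1)) * volume (ball (0:E4) ((2:ℝ)⁻¹ ^ n)) := by
          gcongr
          exact Set.diff_subset
      _ = ENNReal.ofReal ((2:ℝ)^(n+1)) * (ENNReal.ofReal (((2:ℝ)⁻¹ ^ n)^(4:ℕ)) * V) := by
          rw [Measure.addHaar_ball _ _ (by positivity)]
          congr 2
          rw [finrank_euclideanSpace_fin]
      _ = ENNReal.ofReal ((2:ℝ)^(n+1) * ((2:ℝ)⁻¹ ^ n)^(4:ℕ)) * V := by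
          rw [ENNReal.ofReal_mul (by positivity), mul_assoc]
      _ = ENNReal.ofReal (2 * ((8:ℝ)⁻¹)^n) * V := by
          congr 2
          have h1 : (((2:ℝ)⁻¹ ^ n)^(4:ℕ)) = ((2:ℝ)⁻¹ ^ (4:ℕ))^n := by
            rw [← pow_mul, ← pow_mul, mul_comm]
          rw [h1, pow_succ, mul_comm ((2:ℝ)^n) 2, mul_assoc, ← mul_pow]
          norm_num
      _ = 2 * (8⁻¹ : ℝ≥0∞)^n * V := by
          rw [ENNReal.ofReal_mul (by norm_num), ENNReal.ofReal_pow (by norm_num),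
            ENNReal.ofReal_inv_of_pos (by norm_num)]
          norm_num
  have key : ∫⁻ z in ball (0 : E4) 1, ENNReal.ofReal ‖z‖⁻¹
      = ∫⁻ z in ball (0 : E4) 1 \ {0}, ENNReal.ofReal ‖z‖⁻¹ := by
    apply setLIntegral_congr
    exact (diff_ae_eq_self.2 (measure_mono_null Set.inter_subset_right (measure_singleton 0))).symm
  rw [key]
  calc ∫⁻ z in ball (0 : E4) 1 \ {0}, ENNReal.ofReal ‖z‖⁻¹
      ≤ ∫⁻ z in ⋃ n, A n, ENNReal.ofReal ‖z‖⁻¹ := lintegral_mono_set hcover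
    _ ≤ ∑' n, ∫⁻ z in A n, ENNReal.ofReal ‖z‖⁻¹ := lintegral_iUnion_le _ _
    _ ≤ ∑' n : ℕ, 2 * (8⁻¹ : ℝ≥0∞)^n * V := ENNReal.tsum_le_tsum hterm
    _ = 2 * V * ∑' n : ℕ, (8⁻¹ : ℝ≥0∞)^n := by
        rw [← ENNReal.tsum_mul_left]
        congr 1 with n
        ring
    _ < ⊤ := by
        rw [ENNReal.tsum_geometric]
        apply ENNReal.mul_lt_top
        · exact ENNReal.mul_lt_top (by norm_num) hVlt
        · rw [ENNReal.inv_lt_top, tsub_pos_iff_lt]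
          exact ENNReal.inv_lt_one.2 (by norm_num)

lemma riesz_ball (r : ℝ) (hr : 0 < r) :
    ∫⁻ z in ball (0 : E4) r, ENNReal.ofReal ‖z‖⁻¹
      = ENNReal.ofReal (r^3) * ∫⁻ z in ball (0 : E4) 1, ENNReal.ofReal ‖z‖⁻¹ := by
  set K := ∫⁻ z in ball (0 : E4) 1, ENNReal.ofReal ‖z‖⁻¹ with hK
  set L := ∫⁻ z in ball (0 : E4) r, ENNReal.ofReal ‖z‖⁻¹ with hL
  set h : E4 → ℝ≥0∞ := (ball (0:E4) r).indicator (fun z => ENNReal.ofReal ‖z‖⁻¹) with hh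
  have hmeas : Measurable h :=
    Measurable.indicator (measurable_norm.inv.ennreal_ofReal) measurableSet_ball
  have h1 : ∫⁻ z, h z ∂(Measure.map (r • ·) volume) = ∫⁻ w, h (r • w) :=
    lintegral_map hmeas (measurable_const_smul r)
  rw [Measure.map_addHaar_smul volume hr.ne'] at h1
  have h2 : ∀ w : E4, h (r • w)
      = (ball (0:E4) 1).indicator (fun w => ENNReal.ofReal r⁻¹ * ENNReal.ofReal ‖w‖⁻¹) w := by
    intro w
    simp only [hh, Set.indicator]
    have hn : ‖r • w‖ = r * ‖w‖ := by rw [norm_smul, Real.norm_of_nonneg hr.le]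
    by_cases hw : w ∈ ball (0:E4) 1
    · have hw1 : ‖w‖ < 1 := mem_ball_zero_iff.1 hw
      have hmem : r • w ∈ ball (0:E4) r := by
        rw [mem_ball_zero_iff, hn]
        nlinarith [norm_nonneg w]
      rw [if_pos hmem, if_pos hw, hn, mul_inv, ENNReal.ofReal_mul (by positivity)]
    · have hmem : r • w ∉ ball (0:E4) r := by
        rw [mem_ball_zero_iff, hn]
        intro hcon
        apply hw
        rw [mem_ball_zero_iff]
        nlinarith
      rw [if_neg hmem, if_neg hw]
  have h3 : ∫⁻ w, h (r • w) = ENNReal.ofReal r⁻¹ * K := by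
    simp only [h2]
    rw [lintegral_indicator measurableSet_ball _, hK,
      lintegral_const_mul (f := fun z : E4 => ENNReal.ofReal ‖z‖⁻¹) _ (measurable_norm.inv.ennreal_ofReal)]
  have h4 : ∫⁻ z, h z = L := by rw [hh, lintegral_indicator measurableSet_ball _]
  rw [lintegral_smul_measure, h4, h3] at h1
  have hfr : (Module.finrank ℝ (EuclideanSpace ℝ (Fin 4))) = 4 := finrank_euclideanSpace_fin
  rw [hfr] at h1
  have habs : |((r:ℝ)^(4:ℕ))⁻¹| = ((r:ℝ)^(4:ℕ))⁻¹ := abs_of_pos (by positivity)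
  rw [habs] at h1
  have h5 : ENNReal.ofReal (r^(4:ℕ)) * (ENNReal.ofReal ((r^(4:ℕ))⁻¹) * L)
      = ENNReal.ofReal (r^(4:ℕ)) * (ENNReal.ofReal r⁻¹ * K) := by exact congrArg (fun t => ENNReal.ofReal (r^(4:ℕ)) * t) h1
  rw [← mul_assoc, ← ENNReal.ofReal_mul (by positivity),
    mul_inv_cancel₀ (by positivity : (r:ℝ)^(4:ℕ) ≠ 0), ENNReal.ofReal_one, one_mul,
    ← mul_assoc, ← ENNReal.ofReal_mul (by positivity)] at h5
  have : (r:ℝ)^(4:ℕ) * r⁻¹ = r^3 := by field_simp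
  rw [this] at h5
  exact h5

theorem stmt14 (δ Λ C₀ : ℝ) (hδ : 0 < δ) (hδ' : δ < 1) (hΛ : 0 < Λ) (hC₀ : 0 < C₀)
    (u : EuclideanSpace ℝ (Fin 4) → ℝ) (hmeas : Measurable u)
    (hnrj : ∫ x in ball (0 : EuclideanSpace ℝ (Fin 4)) δ, Real.exp (4 * u x) ≤ Λ)
    (hptw : ∀ x ∈ ball (0 : EuclideanSpace ℝ (Fin 4)) δ, ‖x‖ * Real.exp (u x) ≤ C₀) :
    ∃ C' : ℝ, 0 < C' ∧ ∀ x ∈ ball (0 : EuclideanSpace ℝ (Fin 4)) δ, x ≠ 0 →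
      ∫ y in ball (0 : EuclideanSpace ℝ (Fin 4)) δ, Real.exp (4 * u y) / ‖x - y‖
        ≤ C' / ‖x‖ := by
  classical
  have hfmeas : Measurable (fun y : E4 => Real.exp (4 * u y)) :=
    (hmeas.const_mul 4).exp
  set K := ∫⁻ z in ball (0 : E4) 1, ENNReal.ofReal ‖z‖⁻¹ with hKdef
  have hKlt : K < ⊤ := riesz_finite
  set C' : ℝ := 2*Λ + 2*C₀^4*K.toReal + 1 with hC'
  have hC'pos : 0 < C' := by positivity
  refine ⟨C', hC'pos, ?_⟩
  intro x hx hx0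
  have hxn : 0 < ‖x‖ := norm_pos_iff.2 hx0
  have hCdivnn : 0 ≤ C' / ‖x‖ := div_nonneg hC'pos.le (norm_nonneg x)
  by_cases hi : IntegrableOn (fun y : E4 => Real.exp (4 * u y)) (ball (0 : E4) δ) volume
  · -- integrable case
    set g : E4 → ℝ := fun y => Real.exp (4 * u y) / ‖x - y‖ with hg
    have hgmeas : Measurable g := hfmeas.div (measurable_const.sub measurable_id).norm
    have hgnn : ∀ y, 0 ≤ g y := fun y => div_nonneg (exp_pos _).le (norm_nonneg _)
    show (∫ y in ball (0 : E4) δ, g y) ≤ C' / ‖x‖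
    rw [integral_eq_lintegral_of_nonneg_ae (ae_of_all _ hgnn)
      hgmeas.aestronglyMeasurable.restrict]
    set r : ℝ := ‖x‖/2 with hrdef
    have hrpos : 0 < r := by positivity
    -- far bound
    have hfar : ∫⁻ y in ball (0:E4) δ \ ball x r, ENNReal.ofReal (g y)
        ≤ ENNReal.ofReal (2*Λ/‖x‖) := by
      have hb : ∀ y ∈ ball (0:E4) δ \ ball x r,
          ENNReal.ofReal (g y) ≤ ENNReal.ofReal (2/‖x‖) * ENNReal.ofReal (Real.exp (4 * u y)) := by
        intro y hy
        rw [← ENNReal.ofReal_mul (by positivity)]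
        apply ENNReal.ofReal_le_ofReal
        have hxy : r ≤ ‖x - y‖ := by
          have h2 := hy.2
          rw [mem_ball, dist_eq_norm] at h2
          push_neg at h2
          rwa [norm_sub_rev] at h2
        calc g y = Real.exp (4 * u y) / ‖x - y‖ := rfl
          _ ≤ Real.exp (4 * u y) / r := by gcongr
          _ = 2/‖x‖ * Real.exp (4 * u y) := by rw [hrdef]; field_simp; try ring
      calc ∫⁻ y in ball (0:E4) δ \ ball x r, ENNReal.ofReal (g y)
          ≤ ∫⁻ y in ball (0:E4) δ \ ball x r,
              ENNReal.ofReal (2/‖x‖) * ENNReal.ofReal (Real.exp (4 * u y)) :=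
            setLIntegral_mono (measurable_const.mul hfmeas.ennreal_ofReal) hb
        _ ≤ ∫⁻ y in ball (0:E4) δ,
              ENNReal.ofReal (2/‖x‖) * ENNReal.ofReal (Real.exp (4 * u y)) :=
            lintegral_mono_set Set.diff_subset
        _ = ENNReal.ofReal (2/‖x‖) * ∫⁻ y in ball (0:E4) δ,
              ENNReal.ofReal (Real.exp (4 * u y)) :=
            lintegral_const_mul _ hfmeas.ennreal_ofReal
        _ = ENNReal.ofReal (2/‖x‖)
              * ENNReal.ofReal (∫ y in ball (0:E4) δ, Real.exp (4 * u y)) := by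
            rw [← ofReal_integral_eq_lintegral_ofReal hi
              (ae_of_all _ fun y => (exp_pos _).le)]
        _ ≤ ENNReal.ofReal (2/‖x‖) * ENNReal.ofReal Λ := by
            gcongr
            try exact ENNReal.ofReal_le_ofReal hnrj
        _ = ENNReal.ofReal (2*Λ/‖x‖) := by
            rw [← ENNReal.ofReal_mul (by positivity)]
            congr 1
            ring
    -- near bound
    have hnear : ∫⁻ y in ball (0:E4) δ ∩ ball x r, ENNReal.ofReal (g y)
        ≤ ENNReal.ofReal (2*C₀^4*K.toReal/‖x‖) := by
      set c : ℝ := 16*C₀^4/‖x‖^4 with hcdef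
      have hcpos : 0 < c := by positivity
      have hb : ∀ y ∈ ball (0:E4) δ ∩ ball x r,
          ENNReal.ofReal (g y) ≤ ENNReal.ofReal c * ENNReal.ofReal ‖x - y‖⁻¹ := by
        rintro y ⟨hyS, hyN⟩
        rw [← ENNReal.ofReal_mul hcpos.le]
        apply ENNReal.ofReal_le_ofReal
        have hd : ‖y - x‖ < r := by rwa [mem_ball, dist_eq_norm] at hyN
        have h1 : ‖x‖/2 < ‖y‖ := by
          have htri : ‖x‖ ≤ ‖y‖ + ‖x - y‖ := by
            calc ‖x‖ = ‖y + (x - y)‖ := by congr 1; abel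
              _ ≤ ‖y‖ + ‖x - y‖ := norm_add_le _ _
          rw [norm_sub_rev] at hd
          calc ‖x‖/2 = ‖x‖ - r := by rw [hrdef]; ring
            _ < ‖x‖ - ‖x - y‖ := by linarith
            _ ≤ ‖y‖ := by linarith
        have hy0 : 0 < ‖y‖ := lt_trans (by positivity) h1
        have hexp2 : Real.exp (u y) ≤ 2*C₀/‖x‖ := by
          have h2 := hptw y hyS
          have h3 : Real.exp (u y) ≤ C₀ / ‖y‖ := by
            rw [le_div_iff₀ hy0]
            linarith [h2, mul_comm ‖y‖ (Real.exp (u y))]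
          calc Real.exp (u y) ≤ C₀ / ‖y‖ := h3
            _ ≤ C₀ / (‖x‖/2) := by gcongr <;> first | exact hC₀.le | exact h1.le | skip
            _ = 2*C₀/‖x‖ := by field_simp; try ring
        have hfy : Real.exp (4 * u y) ≤ c := by
          have h4 : Real.exp (4 * u y) = (Real.exp (u y))^(4:ℕ) := by
            rw [← Real.exp_nat_mul]
            norm_num
          rw [h4, hcdef]
          calc (Real.exp (u y))^(4:ℕ) ≤ (2*C₀/‖x‖)^(4:ℕ) := by
                gcongr
                try exact (exp_pos _).le
            _ = 16*C₀^4/‖x‖^4 := by field_simp; try ring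
        rcases eq_or_lt_of_le (norm_nonneg (x - y)) with h0 | hpos
        · show Real.exp (4 * u y) / ‖x - y‖ ≤ _
          rw [← h0]
          simp
        · show Real.exp (4 * u y) / ‖x - y‖ ≤ _
          rw [div_eq_mul_inv]
          exact mul_le_mul_of_nonneg_right hfy (by positivity)
      have hchange : ∫⁻ y in ball x r, ENNReal.ofReal ‖x - y‖⁻¹
          = ∫⁻ z in ball (0:E4) r, ENNReal.ofReal ‖z‖⁻¹ := by
        have hmp : MeasurePreserving (fun z : E4 => x - z) volume volume :=
          Measure.measurePreserving_sub_left volume x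
        have hemb : MeasurableEmbedding (fun z : E4 => x - z) :=
          (MeasurableEquiv.subLeft x).measurableEmbedding
        have hpre : (fun z : E4 => x - z) ⁻¹' (ball x r) = ball (0:E4) r := by
          ext z
          simp only [Set.mem_preimage, mem_ball, dist_eq_norm, mem_ball_zero_iff]
          rw [show x - z - x = -z by abel, norm_neg, sub_zero]
        calc ∫⁻ y in ball x r, ENNReal.ofReal ‖x - y‖⁻¹
            = ∫⁻ z in (fun z : E4 => x - z) ⁻¹' (ball x r),
                ENNReal.ofReal ‖x - (x - z)‖⁻¹ :=
              (hmp.setLIntegral_comp_preimage_emb hemb _ _).symm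
          _ = ∫⁻ z in ball (0:E4) r, ENNReal.ofReal ‖z‖⁻¹ := by
              rw [hpre]
              simp_rw [sub_sub_cancel]
      calc ∫⁻ y in ball (0:E4) δ ∩ ball x r, ENNReal.ofReal (g y)
          ≤ ∫⁻ y in ball (0:E4) δ ∩ ball x r,
              ENNReal.ofReal c * ENNReal.ofReal ‖x - y‖⁻¹ :=
            setLIntegral_mono (measurable_const.mul
              ((measurable_const.sub measurable_id).norm.inv.ennreal_ofReal)) hb
        _ ≤ ∫⁻ y in ball x r, ENNReal.ofReal c * ENNReal.ofReal ‖x - y‖⁻¹ :=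
            lintegral_mono_set Set.inter_subset_right
        _ = ENNReal.ofReal c * ∫⁻ y in ball x r, ENNReal.ofReal ‖x - y‖⁻¹ :=
            lintegral_const_mul _ ((measurable_const.sub measurable_id).norm.inv.ennreal_ofReal)
        _ = ENNReal.ofReal c * (ENNReal.ofReal (r^3) * K) := by rw [hchange, riesz_ball r hrpos]
        _ = ENNReal.ofReal (c * r^3) * K := by
            rw [ENNReal.ofReal_mul hcpos.le, mul_assoc]
        _ = ENNReal.ofReal (c * r^3) * ENNReal.ofReal K.toReal := by
            rw [ENNReal.ofReal_toReal hKlt.ne]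
        _ = ENNReal.ofReal (c * r^3 * K.toReal) := by
            rw [← ENNReal.ofReal_mul (by positivity)]
        _ ≤ ENNReal.ofReal (2*C₀^4*K.toReal/‖x‖) := by
            apply ENNReal.ofReal_le_ofReal
            apply le_of_eq
            rw [hcdef, hrdef]
            have hK0 : 0 ≤ K.toReal := ENNReal.toReal_nonneg
            field_simp
            ring
    -- assemble
    have htotal : ∫⁻ y in ball (0:E4) δ, ENNReal.ofReal (g y)
        ≤ ENNReal.ofReal (C' / ‖x‖) := by
      have hsplit : ball (0:E4) δ
          = (ball (0:E4) δ ∩ ball x r) ∪ (ball (0:E4) δ \ ball x r) :=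
        (Set.inter_union_diff _ _).symm
      calc ∫⁻ y in ball (0:E4) δ, ENNReal.ofReal (g y)
          = ∫⁻ y in (ball (0:E4) δ ∩ ball x r) ∪ (ball (0:E4) δ \ ball x r),
              ENNReal.ofReal (g y) := by rw [← hsplit]
        _ ≤ (∫⁻ y in ball (0:E4) δ ∩ ball x r, ENNReal.ofReal (g y))
            + ∫⁻ y in ball (0:E4) δ \ ball x r, ENNReal.ofReal (g y) :=
            lintegral_union_le _ _ _
        _ ≤ ENNReal.ofReal (2*C₀^4*K.toReal/‖x‖) + ENNReal.ofReal (2*Λ/‖x‖) :=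
            add_le_add hnear hfar
        _ = ENNReal.ofReal (2*C₀^4*K.toReal/‖x‖ + 2*Λ/‖x‖) := by
            rw [ENNReal.ofReal_add (by positivity) (by positivity)]
        _ ≤ ENNReal.ofReal (C' / ‖x‖) := by
            apply ENNReal.ofReal_le_ofReal
            rw [← add_div, hC', div_le_div_iff_of_pos_right hxn]
            linarith
    exact ENNReal.toReal_le_of_le_ofReal hCdivnn htotal
  · -- non-integrable case
    have hgi : ¬ IntegrableOn (fun y : E4 => Real.exp (4 * u y) / ‖x - y‖)
        (ball (0 : E4) δ) volume := by
      intro hgint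
      apply hi
      have h2δ : IntegrableOn
          (fun y : E4 => (2*δ) * (Real.exp (4 * u y) / ‖x - y‖)) (ball (0 : E4) δ) volume :=
        hgint.const_mul _
      refine Integrable.mono' h2δ hfmeas.aestronglyMeasurable.restrict ?_
      have hne : ∀ᵐ (y : E4) ∂(volume.restrict (ball (0:E4) δ)), y ≠ x := by
        apply ae_restrict_of_ae
        rw [ae_iff]
        simpa using measure_singleton (μ := (volume : Measure E4)) x
      filter_upwards [ae_restrict_mem measurableSet_ball, hne] with y hyS hyx
      rw [Real.norm_of_nonneg (exp_pos _).le]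
      have hxy0 : (0:ℝ) < ‖x - y‖ := by
        rw [norm_pos_iff, sub_ne_zero]
        exact fun h => hyx h.symm
      have hxy2 : ‖x - y‖ ≤ 2*δ := by
        have h1 : ‖x‖ < δ := mem_ball_zero_iff.1 hx
        have h2 : ‖y‖ < δ := mem_ball_zero_iff.1 hyS
        calc ‖x - y‖ ≤ ‖x‖ + ‖y‖ := norm_sub_le _ _
          _ ≤ 2*δ := by linarith
      calc Real.exp (4 * u y)
          = (Real.exp (4 * u y) / ‖x - y‖) * ‖x - y‖ := (div_mul_cancel₀ _ hxy0.ne').symm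
        _ ≤ (Real.exp (4 * u y) / ‖x - y‖) * (2*δ) :=
            mul_le_mul_of_nonneg_left hxy2 (div_nonneg (exp_pos _).le (norm_nonneg _))
        _ = 2*δ * (Real.exp (4 * u y) / ‖x - y‖) := by ring
    rw [integral_undef hgi]
    exact hCdivnn
end
end
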